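/- arXiv:q-alg/9703046 — 3 statements merged into one kernel-verified Lean document; each statement's English description precedes it below -/
import Mathlib

section
/- Let x ∈ ℂ, let c₁, c₂ ∈ ℝ, and let η₁, η₂, η₃ be nonzero real parameters. Assume all hyperbolic sines appearing in the denominators below are nonzero. Then F(x + iħc₂/2; η₁, η₂, c₁)·F(x − iħc₁/2; η₂, η₃, c₂) = F(x; η₁, η₃, c₁ + c₂). -/
/-- The structure function `F(x; η, η̃, c)` of the `H⁺ H⁻` exchange relation of
`A_{ħ,η}(ĝ)`, with `b = B_{ij}` and `hbar = ħ`. -/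
noncomputable def Ffn (hbar b η η' c : ℝ) (x : ℂ) : ℂ :=
  (Complex.sinh ((Real.pi : ℂ) * (η : ℂ) * (x - Complex.I * (hbar : ℂ) * ((b : ℂ) - (c : ℂ) / 2))) *
      Complex.sinh ((Real.pi : ℂ) * (η' : ℂ) * (x + Complex.I * (hbar : ℂ) * ((b : ℂ) - (c : ℂ) / 2)))) /
    (Complex.sinh ((Real.pi : ℂ) * (η : ℂ) * (x + Complex.I * (hbar : ℂ) * ((b : ℂ) + (c : ℂ) / 2))) *
      Complex.sinh ((Real.pi : ℂ) * (η' : ℂ) * (x - Complex.I * (hbar : ℂ) * ((b : ℂ) + (c : ℂ) / 2))))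

/-- the cocycle identity
`F(x + iħc₂/2; η₁, η₂, c₁)·F(x − iħc₁/2; η₂, η₃, c₂) = F(x; η₁, η₃, c₁ + c₂)`
verifying that `Δ⁺` maps the `H⁺H⁻` relation to that of the combined algebra. -/
theorem Ffn_cocycle (hbar b : ℝ) (x : ℂ) (c₁ c₂ : ℝ) (η₁ η₂ η₃ : ℝ)
    (h₁ : η₁ ≠ 0) (h₂ : η₂ ≠ 0) (h₃ : η₃ ≠ 0)
    (hd1 : Complex.sinh ((Real.pi : ℂ) * (η₁ : ℂ) *
      ((x + Complex.I * (hbar : ℂ) * (c₂ : ℂ) / 2) +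
        Complex.I * (hbar : ℂ) * ((b : ℂ) + (c₁ : ℂ) / 2))) ≠ 0)
    (hd2 : Complex.sinh ((Real.pi : ℂ) * (η₂ : ℂ) *
      ((x + Complex.I * (hbar : ℂ) * (c₂ : ℂ) / 2) -
        Complex.I * (hbar : ℂ) * ((b : ℂ) + (c₁ : ℂ) / 2))) ≠ 0)
    (hd3 : Complex.sinh ((Real.pi : ℂ) * (η₂ : ℂ) *
      ((x - Complex.I * (hbar : ℂ) * (c₁ : ℂ) / 2) +
        Complex.I * (hbar : ℂ) * ((b : ℂ) + (c₂ : ℂ) / 2))) ≠ 0)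
    (hd4 : Complex.sinh ((Real.pi : ℂ) * (η₃ : ℂ) *
      ((x - Complex.I * (hbar : ℂ) * (c₁ : ℂ) / 2) -
        Complex.I * (hbar : ℂ) * ((b : ℂ) + (c₂ : ℂ) / 2))) ≠ 0)
    (hd5 : Complex.sinh ((Real.pi : ℂ) * (η₁ : ℂ) *
      (x + Complex.I * (hbar : ℂ) * ((b : ℂ) + ((c₁ : ℂ) + (c₂ : ℂ)) / 2))) ≠ 0)
    (hd6 : Complex.sinh ((Real.pi : ℂ) * (η₃ : ℂ) *
      (x - Complex.I * (hbar : ℂ) * ((b : ℂ) + ((c₁ : ℂ) + (c₂ : ℂ)) / 2))) ≠ 0) :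
    Ffn hbar b η₁ η₂ c₁ (x + Complex.I * (hbar : ℂ) * (c₂ : ℂ) / 2) *
        Ffn hbar b η₂ η₃ c₂ (x - Complex.I * (hbar : ℂ) * (c₁ : ℂ) / 2) =
      Ffn hbar b η₁ η₃ (c₁ + c₂) x := by
  unfold Ffn
  -- canonical forms
  have e1 : (Real.pi : ℂ) * (η₁ : ℂ) * ((x + Complex.I * (hbar : ℂ) * (c₂ : ℂ) / 2) -
      Complex.I * (hbar : ℂ) * ((b : ℂ) - (c₁ : ℂ) / 2)) =
      (Real.pi : ℂ) * (η₁ : ℂ) * (x - Complex.I * (hbar : ℂ) * ((b : ℂ) - ((c₁ : ℂ) + (c₂ : ℂ)) / 2)) := by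
    ring
  have e2 : (Real.pi : ℂ) * (η₂ : ℂ) * ((x + Complex.I * (hbar : ℂ) * (c₂ : ℂ) / 2) +
      Complex.I * (hbar : ℂ) * ((b : ℂ) - (c₁ : ℂ) / 2)) =
      (Real.pi : ℂ) * (η₂ : ℂ) * ((x - Complex.I * (hbar : ℂ) * (c₁ : ℂ) / 2) +
      Complex.I * (hbar : ℂ) * ((b : ℂ) + (c₂ : ℂ) / 2)) := by
    ring
  have e3 : (Real.pi : ℂ) * (η₁ : ℂ) * ((x + Complex.I * (hbar : ℂ) * (c₂ : ℂ) / 2) +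
      Complex.I * (hbar : ℂ) * ((b : ℂ) + (c₁ : ℂ) / 2)) =
      (Real.pi : ℂ) * (η₁ : ℂ) * (x + Complex.I * (hbar : ℂ) * ((b : ℂ) + ((c₁ : ℂ) + (c₂ : ℂ)) / 2)) := by
    ring
  have e4 : (Real.pi : ℂ) * (η₂ : ℂ) * ((x - Complex.I * (hbar : ℂ) * (c₁ : ℂ) / 2) -
      Complex.I * (hbar : ℂ) * ((b : ℂ) - (c₂ : ℂ) / 2)) =
      (Real.pi : ℂ) * (η₂ : ℂ) * ((x + Complex.I * (hbar : ℂ) * (c₂ : ℂ) / 2) -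
      Complex.I * (hbar : ℂ) * ((b : ℂ) + (c₁ : ℂ) / 2)) := by
    ring
  have e5 : (Real.pi : ℂ) * (η₃ : ℂ) * ((x - Complex.I * (hbar : ℂ) * (c₁ : ℂ) / 2) +
      Complex.I * (hbar : ℂ) * ((b : ℂ) - (c₂ : ℂ) / 2)) =
      (Real.pi : ℂ) * (η₃ : ℂ) * (x + Complex.I * (hbar : ℂ) * ((b : ℂ) - ((c₁ : ℂ) + (c₂ : ℂ)) / 2)) := by
    ring
  have e6 : (Real.pi : ℂ) * (η₃ : ℂ) * ((x - Complex.I * (hbar : ℂ) * (c₁ : ℂ) / 2) -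
      Complex.I * (hbar : ℂ) * ((b : ℂ) + (c₂ : ℂ) / 2)) =
      (Real.pi : ℂ) * (η₃ : ℂ) * (x - Complex.I * (hbar : ℂ) * ((b : ℂ) + ((c₁ : ℂ) + (c₂ : ℂ)) / 2)) := by
    ring
  rw [e1, e2, e3, e4, e5, e6]
  rw [e3] at hd1
  set A := Complex.sinh ((Real.pi : ℂ) * (η₁ : ℂ) * (x - Complex.I * (hbar : ℂ) * ((b : ℂ) - ((c₁ : ℂ) + (c₂ : ℂ)) / 2)))
  set B := Complex.sinh ((Real.pi : ℂ) * (η₂ : ℂ) * ((x - Complex.I * (hbar : ℂ) * (c₁ : ℂ) / 2) +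
      Complex.I * (hbar : ℂ) * ((b : ℂ) + (c₂ : ℂ) / 2)))
  set C := Complex.sinh ((Real.pi : ℂ) * (η₁ : ℂ) * (x + Complex.I * (hbar : ℂ) * ((b : ℂ) + ((c₁ : ℂ) + (c₂ : ℂ)) / 2)))
  set E := Complex.sinh ((Real.pi : ℂ) * (η₂ : ℂ) * ((x + Complex.I * (hbar : ℂ) * (c₂ : ℂ) / 2) -
      Complex.I * (hbar : ℂ) * ((b : ℂ) + (c₁ : ℂ) / 2)))
  set G := Complex.sinh ((Real.pi : ℂ) * (η₃ : ℂ) * (x + Complex.I * (hbar : ℂ) * ((b : ℂ) - ((c₁ : ℂ) + (c₂ : ℂ)) / 2)))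
  set H := Complex.sinh ((Real.pi : ℂ) * (η₃ : ℂ) * (x - Complex.I * (hbar : ℂ) * ((b : ℂ) + ((c₁ : ℂ) + (c₂ : ℂ)) / 2)))
  have hBE : B * E ≠ 0 := mul_ne_zero hd3 hd2
  rw [div_mul_div_comm, show A * B * (E * G) = A * G * (B * E) by ring,
    show C * E * (B * H) = C * H * (B * E) by ring,
    mul_div_mul_right _ _ hBE]
  push_cast
  rfl
end

section
/- Let x ∈ ℂ, let c₁, c₂ ∈ ℝ, and let η₁, η₂ be nonzero real parameters. Assume all hyperbolic sines appearing in the denominators below are nonzero. Then: (1) h(x + iħc₂/4; η₁, c₁) = h(x; η₁, c₁ + c₂); and (2) F(x + iħ(c₂ − c₁)/4; η₁, η₂, c₁)·h(x − 3iħc₁/4; η₂, c₂) = h(x; η₁, c₁ + c₂). -/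
/-- The structure function `h(x; η, c)` of the `H⁺ E` exchange relation of
`A_{ħ,η}(ĝ)`, with `b = B_{ij}` and `hbar = ħ`. -/
noncomputable def hFn (hbar b η c : ℝ) (x : ℂ) : ℂ :=
  Complex.sinh ((Real.pi : ℂ) * (η : ℂ) * (x - Complex.I * (hbar : ℂ) * ((b : ℂ) - (c : ℂ) / 4))) /
    Complex.sinh ((Real.pi : ℂ) * (η : ℂ) * (x + Complex.I * (hbar : ℂ) * ((b : ℂ) + (c : ℂ) / 4)))

/-- the scalar identities verifying that `Δ⁺` preserves the `H⁺–E`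
exchange relation: (1) `h(x + iħc₂/4; η₁, c₁) = h(x; η₁, c₁ + c₂)` (the term `E⊗1`), and
(2) `F(x + iħ(c₂ − c₁)/4; η₁, η₂, c₁)·h(x − 3iħc₁/4; η₂, c₂) = h(x; η₁, c₁ + c₂)`
(the term `H⁻⊗E`). -/
theorem hFn_coproduct (hbar b : ℝ) (x : ℂ) (c₁ c₂ : ℝ) (η₁ η₂ : ℝ)
    (h₁ : η₁ ≠ 0) (h₂ : η₂ ≠ 0)
    (hd1 : Complex.sinh ((Real.pi : ℂ) * (η₁ : ℂ) *
      ((x + Complex.I * (hbar : ℂ) * (c₂ : ℂ) / 4) +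
        Complex.I * (hbar : ℂ) * ((b : ℂ) + (c₁ : ℂ) / 4))) ≠ 0)
    (hd2 : Complex.sinh ((Real.pi : ℂ) * (η₁ : ℂ) *
      (x + Complex.I * (hbar : ℂ) * ((b : ℂ) + ((c₁ : ℂ) + (c₂ : ℂ)) / 4))) ≠ 0)
    (hd3 : Complex.sinh ((Real.pi : ℂ) * (η₁ : ℂ) *
      ((x + Complex.I * (hbar : ℂ) * ((c₂ : ℂ) - (c₁ : ℂ)) / 4) +
        Complex.I * (hbar : ℂ) * ((b : ℂ) + (c₁ : ℂ) / 2))) ≠ 0)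
    (hd4 : Complex.sinh ((Real.pi : ℂ) * (η₂ : ℂ) *
      ((x + Complex.I * (hbar : ℂ) * ((c₂ : ℂ) - (c₁ : ℂ)) / 4) -
        Complex.I * (hbar : ℂ) * ((b : ℂ) + (c₁ : ℂ) / 2))) ≠ 0)
    (hd5 : Complex.sinh ((Real.pi : ℂ) * (η₂ : ℂ) *
      ((x - 3 * Complex.I * (hbar : ℂ) * (c₁ : ℂ) / 4) +
        Complex.I * (hbar : ℂ) * ((b : ℂ) + (c₂ : ℂ) / 4))) ≠ 0) :
    hFn hbar b η₁ c₁ (x + Complex.I * (hbar : ℂ) * (c₂ : ℂ) / 4) =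
        hFn hbar b η₁ (c₁ + c₂) x ∧
      Ffn hbar b η₁ η₂ c₁ (x + Complex.I * (hbar : ℂ) * ((c₂ : ℂ) - (c₁ : ℂ)) / 4) *
          hFn hbar b η₂ c₂ (x - 3 * Complex.I * (hbar : ℂ) * (c₁ : ℂ) / 4) =
        hFn hbar b η₁ (c₁ + c₂) x := by
  constructor
  · unfold hFn
    push_cast
    congr 2 <;> ring
  · unfold hFn Ffn
    push_cast
    rw [div_mul_div_comm]
    rw [div_eq_div_iff (by
      have e : (Real.pi : ℂ) * (η₁ : ℂ) *
          ((x + Complex.I * (hbar : ℂ) * ((c₂ : ℂ) - (c₁ : ℂ)) / 4) +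
            Complex.I * (hbar : ℂ) * ((b : ℂ) + (c₁ : ℂ) / 2)) =
          (Real.pi : ℂ) * (η₁ : ℂ) *
          ((x + Complex.I * (hbar : ℂ) * ((c₂ : ℂ) - (c₁ : ℂ)) / 4) +
            Complex.I * (hbar : ℂ) * ((b : ℂ) + (c₁ : ℂ) / 2)) := rfl
      exact mul_ne_zero (mul_ne_zero hd3 hd4) hd5) hd2]
    have e1 : (Real.pi : ℂ) * (η₁ : ℂ) *
        ((x + Complex.I * (hbar : ℂ) * ((c₂ : ℂ) - (c₁ : ℂ)) / 4) -
          Complex.I * (hbar : ℂ) * ((b : ℂ) - (c₁ : ℂ) / 2)) =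
        (Real.pi : ℂ) * (η₁ : ℂ) *
        (x - Complex.I * (hbar : ℂ) * ((b : ℂ) - ((c₁ : ℂ) + (c₂ : ℂ)) / 4)) := by ring
    have e2 : (Real.pi : ℂ) * (η₂ : ℂ) *
        ((x + Complex.I * (hbar : ℂ) * ((c₂ : ℂ) - (c₁ : ℂ)) / 4) +
          Complex.I * (hbar : ℂ) * ((b : ℂ) - (c₁ : ℂ) / 2)) =
        (Real.pi : ℂ) * (η₂ : ℂ) *
        ((x - 3 * Complex.I * (hbar : ℂ) * (c₁ : ℂ) / 4) +
          Complex.I * (hbar : ℂ) * ((b : ℂ) + (c₂ : ℂ) / 4)) := by ring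
    have e3 : (Real.pi : ℂ) * (η₁ : ℂ) *
        ((x + Complex.I * (hbar : ℂ) * ((c₂ : ℂ) - (c₁ : ℂ)) / 4) +
          Complex.I * (hbar : ℂ) * ((b : ℂ) + (c₁ : ℂ) / 2)) =
        (Real.pi : ℂ) * (η₁ : ℂ) *
        (x + Complex.I * (hbar : ℂ) * ((b : ℂ) + ((c₁ : ℂ) + (c₂ : ℂ)) / 4)) := by ring
    have e4 : (Real.pi : ℂ) * (η₂ : ℂ) *
        ((x + Complex.I * (hbar : ℂ) * ((c₂ : ℂ) - (c₁ : ℂ)) / 4) -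
          Complex.I * (hbar : ℂ) * ((b : ℂ) + (c₁ : ℂ) / 2)) =
        (Real.pi : ℂ) * (η₂ : ℂ) *
        ((x - 3 * Complex.I * (hbar : ℂ) * (c₁ : ℂ) / 4) -
          Complex.I * (hbar : ℂ) * ((b : ℂ) - (c₂ : ℂ) / 4)) := by ring
    rw [e1, e2, e3, e4]
    ring
end

section
/- Fix ħ, B, c ∈ ℝ and x ∈ ℂ with x + iħ(B + c/2) ≠ 0 and x − iħ(B + c/2) ≠ 0. For nonzero real η near 0 set η'(η) = η/(1 + ηħc) (so that 1/η'(η) − 1/η = ħc). Then, as η tends to 0 through nonzero real values, F(x; η, η'(η), c) tends to [(x − iħ(B − c/2))·(x + iħ(B − c/2))]/[(x + iħ(B + c/2))·(x − iħ(B + c/2))]. -/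
open Filter Topology

lemma sinh_slope : Tendsto (fun w : ℂ => Complex.sinh w / w) (𝓝[≠] 0) (𝓝 1) := by
  have h := (Complex.hasDerivAt_sinh 0)
  rw [hasDerivAt_iff_tendsto_slope] at h
  simp only [Complex.cosh_zero] at h
  refine h.congr' ?_
  filter_upwards [self_mem_nhdsWithin] with w hw
  simp [slope, Complex.sinh_zero, hw, div_eq_inv_mul]

lemma keyA (z : ℂ) :
    Tendsto (fun η : ℝ => Complex.sinh ((Real.pi : ℂ) * η * z) / (η : ℂ)) (𝓝[≠] (0:ℝ))
      (𝓝 ((Real.pi : ℂ) * z)) := by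
  rcases eq_or_ne z 0 with rfl | hz
  · simp
  have hmap : Tendsto (fun η : ℝ => (Real.pi : ℂ) * η * z) (𝓝[≠] (0:ℝ)) (𝓝[≠] (0:ℂ)) := by
    rw [tendsto_nhdsWithin_iff]
    constructor
    · have : Tendsto (fun η : ℝ => (Real.pi : ℂ) * η * z) (𝓝 (0:ℝ)) (𝓝 ((Real.pi:ℂ)*0*z)) := by
        exact ((continuous_const.mul Complex.continuous_ofReal).mul continuous_const).tendsto 0
      simpa using this.mono_left nhdsWithin_le_nhds
    · filter_upwards [self_mem_nhdsWithin] with η hη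
      simp only [Set.mem_compl_iff, Set.mem_singleton_iff]
      exact mul_ne_zero (mul_ne_zero (by exact_mod_cast Real.pi_ne_zero)
        (by exact_mod_cast hη)) hz
  have h := (sinh_slope.comp hmap).mul (tendsto_const_nhds (x := (Real.pi : ℂ) * z))
  rw [one_mul] at h
  refine h.congr' ?_
  filter_upwards [self_mem_nhdsWithin] with η hη
  have hπ : ((Real.pi : ℂ) * η * z) ≠ 0 :=
    mul_ne_zero (mul_ne_zero (by exact_mod_cast Real.pi_ne_zero) (by exact_mod_cast hη)) hz
  have hη' : (η : ℂ) ≠ 0 := by exact_mod_cast hη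
  simp only [Function.comp_apply]
  field_simp [Function.comp]

lemma keyB (hbar c : ℝ) (z : ℂ) :
    Tendsto (fun η : ℝ =>
        Complex.sinh ((Real.pi : ℂ) * ((η / (1 + η * hbar * c) : ℝ) : ℂ) * z) / (η : ℂ))
      (𝓝[≠] (0:ℝ)) (𝓝 ((Real.pi : ℂ) * z)) := by
  have hden : ∀ᶠ η in 𝓝[≠] (0:ℝ), (1 + η * hbar * c) ≠ 0 := by
    have : Tendsto (fun η : ℝ => 1 + η * hbar * c) (𝓝[≠] (0:ℝ)) (𝓝 1) := by
      have : Tendsto (fun η : ℝ => 1 + η * hbar * c) (𝓝 (0:ℝ)) (𝓝 (1 + 0 * hbar * c)) := by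
        exact (continuous_const.add ((continuous_id.mul continuous_const).mul
          continuous_const)).tendsto 0
      simpa using this.mono_left nhdsWithin_le_nhds
    exact this.eventually_ne one_ne_zero
  have hmap : Tendsto (fun η : ℝ => η / (1 + η * hbar * c)) (𝓝[≠] (0:ℝ)) (𝓝[≠] (0:ℝ)) := by
    rw [tendsto_nhdsWithin_iff]
    constructor
    · have h1 : Tendsto (fun η : ℝ => η / (1 + η * hbar * c)) (𝓝 (0:ℝ)) (𝓝 (0 / (1 + 0*hbar*c))) := by
        apply Tendsto.div tendsto_id
        · exact (continuous_const.add ((continuous_id.mul continuous_const).mul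
            continuous_const)).tendsto 0
        · simp
      simpa using h1.mono_left nhdsWithin_le_nhds
    · filter_upwards [self_mem_nhdsWithin, hden] with η hη hd
      simp only [Set.mem_compl_iff, Set.mem_singleton_iff]
      exact div_ne_zero hη hd
  have hratio : Tendsto (fun η : ℝ => ((1 + η * hbar * c : ℝ) : ℂ)⁻¹) (𝓝[≠] (0:ℝ)) (𝓝 1) := by
    have h1 : Tendsto (fun η : ℝ => ((1 + η * hbar * c : ℝ) : ℂ)) (𝓝[≠] (0:ℝ)) (𝓝 1) := by
      have : Tendsto (fun η : ℝ => ((1 + η * hbar * c : ℝ) : ℂ)) (𝓝 (0:ℝ))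
          (𝓝 ((1 + 0*hbar*c : ℝ) : ℂ)) :=
        (Complex.continuous_ofReal.comp (continuous_const.add
          ((continuous_id.mul continuous_const).mul continuous_const))).tendsto 0
      simpa using this.mono_left nhdsWithin_le_nhds
    simpa using h1.inv₀ one_ne_zero
  have h := ((keyA z).comp hmap).mul hratio
  rw [mul_one] at h
  refine h.congr' ?_
  filter_upwards [self_mem_nhdsWithin, hden] with η hη hd
  have hη' : (η : ℂ) ≠ 0 := by exact_mod_cast hη
  have hd' : ((1 + η * hbar * c : ℝ) : ℂ) ≠ 0 := by exact_mod_cast hd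
  have hd'' : (1 + (η:ℂ) * hbar * c) ≠ 0 := by push_cast at hd'; exact hd'
  simp only [Function.comp]
  push_cast
  field_simp

lemma div_div_cancel4 (X Y e : ℂ) (he : e ≠ 0) : (X/e)/(Y/e) = X/Y := by
  rw [div_div_div_eq, mul_comm X e, mul_div_mul_left _ _ he]


/-- with `η'(η) = η/(1 + ηħc)` (so that `1/η' − 1/η = ħc`), the structure
function `F(x; η, η'(η), c)` tends, as the real parameter `η → 0` through nonzero values,
to the rational structure function of the Yangian double with center `DY_ħ(g)_c`. -/
theorem Ffn_tendsto_yangian (hbar b c : ℝ) (x : ℂ)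
    (h1 : x + Complex.I * (hbar : ℂ) * ((b : ℂ) + (c : ℂ) / 2) ≠ 0)
    (h2 : x - Complex.I * (hbar : ℂ) * ((b : ℂ) + (c : ℂ) / 2) ≠ 0) :
    Tendsto (fun η : ℝ => Ffn hbar b η (η / (1 + η * hbar * c)) c x)
      (𝓝[≠] (0 : ℝ))
      (𝓝 (((x - Complex.I * (hbar : ℂ) * ((b : ℂ) - (c : ℂ) / 2)) *
            (x + Complex.I * (hbar : ℂ) * ((b : ℂ) - (c : ℂ) / 2))) /
          ((x + Complex.I * (hbar : ℂ) * ((b : ℂ) + (c : ℂ) / 2)) *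
            (x - Complex.I * (hbar : ℂ) * ((b : ℂ) + (c : ℂ) / 2))))) := by
  set a1 := x - Complex.I * (hbar : ℂ) * ((b : ℂ) - (c : ℂ) / 2) with ha1
  set a2 := x + Complex.I * (hbar : ℂ) * ((b : ℂ) - (c : ℂ) / 2) with ha2
  set d1 := x + Complex.I * (hbar : ℂ) * ((b : ℂ) + (c : ℂ) / 2) with hd1
  set d2 := x - Complex.I * (hbar : ℂ) * ((b : ℂ) + (c : ℂ) / 2) with hd2
  have hπ : ((Real.pi : ℂ)) ≠ 0 := by exact_mod_cast Real.pi_ne_zero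
  have hN := (keyA (z := a1)).mul (keyB hbar c a2)
  have hD := (keyA (z := d1)).mul (keyB hbar c d2)
  have hDne : (Real.pi : ℂ) * d1 * ((Real.pi : ℂ) * d2) ≠ 0 :=
    mul_ne_zero (mul_ne_zero hπ h1) (mul_ne_zero hπ h2)
  have h := hN.div hD hDne
  have heq : ((Real.pi : ℂ) * a1 * ((Real.pi : ℂ) * a2)) / ((Real.pi : ℂ) * d1 * ((Real.pi : ℂ) * d2))
      = (a1 * a2) / (d1 * d2) := by
    rw [show (Real.pi : ℂ) * a1 * ((Real.pi : ℂ) * a2) = ((Real.pi:ℂ)*(Real.pi:ℂ)) * (a1*a2) by ring,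
        show (Real.pi : ℂ) * d1 * ((Real.pi : ℂ) * d2) = ((Real.pi:ℂ)*(Real.pi:ℂ)) * (d1*d2) by ring,
        mul_div_mul_left _ _ (mul_ne_zero hπ hπ)]
  rw [heq] at h
  refine h.congr' ?_
  filter_upwards [self_mem_nhdsWithin] with η hη
  have hη' : (η : ℂ) ≠ 0 := by exact_mod_cast hη
  simp only [Ffn, ← ha1, ← ha2, ← hd1, ← hd2]
  simp only [Pi.div_apply, div_mul_div_comm]
  rw [div_div_cancel4 _ _ _ (mul_ne_zero hη' hη')]
end
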